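/- arXiv:1807.06491 — 5 statements merged into one kernel-verified Lean document; each statement's English description precedes it below -/
import Mathlib

section
/- Let $C\in M_k$ be a correlation matrix and $d\in\mathbb{N}$. If the map $\delta_d\otimes S_C\colon M_d\otimes M_k\to M_d\otimes M_k$ is mixed unitary, then $C$ lies in the convex hull of the set $\mathcal{F}_k(d)=\{(\operatorname{tr}_d(U_i^* U_j))_{i,j=1}^k : U_1,\dots,U_k\in\mathcal{U}(d)\}$. -/
open scoped Matrix.Norms.L2Operator ComplexOrder

namespace Paper

noncomputable section
open Matrix

def schur {k : ℕ} (C X : Matrix (Fin k) (Fin k) ℂ) : Matrix (Fin k) (Fin k) ℂ :=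
  Matrix.of fun i j => C i j * X i j

def deltaTensor (d k : ℕ)
    (T : Matrix (Fin k) (Fin k) ℂ → Matrix (Fin k) (Fin k) ℂ)
    (A : Matrix (Fin d × Fin k) (Fin d × Fin k) ℂ) :
    Matrix (Fin d × Fin k) (Fin d × Fin k) ℂ :=
  Matrix.of fun p q =>
    (if p.1 = q.1 then 1 else 0) *
      (T (Matrix.of fun i j => (d : ℂ)⁻¹ * ∑ a : Fin d, A (a, i) (a, j))) p.2 q.2

def MixedUnitary {n : Type} [Fintype n] [DecidableEq n]
    (Φ : Matrix n n ℂ → Matrix n n ℂ) : Prop :=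
  ∃ (M : ℕ) (p : Fin M → ℝ) (V : Fin M → Matrix n n ℂ),
    (∀ l, 0 ≤ p l) ∧ (∑ l, p l = 1) ∧ (∀ l, V l ∈ Matrix.unitaryGroup n ℂ) ∧
    ∀ X, Φ X = ∑ l, (p l : ℂ) • (V l * X * (V l)ᴴ)

def CompletelyPositive {n : Type} [Fintype n] [DecidableEq n]
    (T : Matrix n n ℂ → Matrix n n ℂ) : Prop :=
  ∀ (m : ℕ) (A : Matrix (Fin m × n) (Fin m × n) ℂ), A.PosSemidef →
    (Matrix.of fun p q : Fin m × n =>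
      (T (Matrix.of fun i j => A (p.1, i) (q.1, j))) p.2 q.2).PosSemidef

def Fset (d k : ℕ) : Set (Matrix (Fin k) (Fin k) ℂ) :=
  {C | ∃ U : Fin k → Matrix (Fin d) (Fin d) ℂ,
    (∀ i, U i ∈ Matrix.unitaryGroup (Fin d) ℂ) ∧
    C = Matrix.of fun i j => (d : ℂ)⁻¹ * ((U i)ᴴ * U j).trace}

def opNorm {n m : Type} [Fintype n] [DecidableEq n] [Fintype m] [DecidableEq m]
    (f : Matrix n n ℂ → Matrix m m ℂ) : ℝ :=
  sSup {r | ∃ X : Matrix n n ℂ, ‖X‖ ≤ 1 ∧ r = ‖f X‖}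

def distMU (d k : ℕ)
    (Φ : Matrix (Fin d × Fin k) (Fin d × Fin k) ℂ → Matrix (Fin d × Fin k) (Fin d × Fin k) ℂ) : ℝ :=
  sInf {r | ∃ Ψ, MixedUnitary Ψ ∧ r = opNorm (fun A => Φ A - Ψ A)}


def Eij (d k : ℕ) (i j : Fin k) : Matrix (Fin d × Fin k) (Fin d × Fin k) ℂ :=
  Matrix.of fun x y => if x.1 = y.1 ∧ x.2 = i ∧ y.2 = j then 1 else 0

lemma deltaTensor_Eij {d k : ℕ} (hd : 0 < d) (C : Matrix (Fin k) (Fin k) ℂ)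
    (i j : Fin k) : deltaTensor d k (schur C) (Eij d k i j) = C i j • Eij d k i j := by
  have hdC : (d : ℂ) ≠ 0 := Nat.cast_ne_zero.mpr hd.ne'
  ext ⟨a, i'⟩ ⟨b, j'⟩
  simp only [deltaTensor, schur, Eij, Matrix.of_apply, Matrix.smul_apply, smul_eq_mul]
  by_cases h1 : i' = i
  · by_cases h2 : j' = j
    · subst h1; subst h2
      simp only [eq_self_iff_true, and_self, true_and, and_true, if_true, Finset.sum_const,
        Finset.card_univ, Fintype.card_fin, nsmul_eq_mul, mul_one]
      rw [inv_mul_cancel₀ hdC]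
      by_cases hab : a = b <;> simp [hab] <;> ring
    · simp [h2]
  · simp [h1]

lemma mul_Eij_apply {d k : ℕ} (W : Matrix (Fin d × Fin k) (Fin d × Fin k) ℂ)
    (i j : Fin k) (q r : Fin d × Fin k) :
    (W * Eij d k i j * Wᴴ) q r
      = ∑ c : Fin d, W q (c, i) * star (W r (c, j)) := by
  rw [Matrix.mul_assoc, Matrix.mul_apply, Fintype.sum_prod_type]
  have h1 : ∀ (c : Fin d) (m : Fin k), (Eij d k i j * Wᴴ) (c, m) r
      = if m = i then star (W r (c, j)) else 0 := by
    intro c m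
    rw [Matrix.mul_apply, Fintype.sum_prod_type]
    simp only [Eij, Matrix.of_apply, Matrix.conjTranspose_apply, ite_mul, one_mul, zero_mul]
    by_cases hm : m = i
    · subst hm
      simp [ite_and]
    · simp [hm]
  simp only [h1, mul_ite, mul_zero]
  simp

/-- If `C` is a correlation matrix and `δ_d ⊗ S_C` is mixed unitary,
then `C ∈ conv(F_k(d))`. -/
theorem stmt3 (d k : ℕ) (hd : 0 < d) (C : Matrix (Fin k) (Fin k) ℂ)
    (hC : C.PosSemidef) (hdiag : ∀ i, C i i = 1)
    (hMU : MixedUnitary (deltaTensor d k (schur C))) :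
    C ∈ convexHull ℝ (Fset d k) := by
  classical
  have hdC : (d : ℂ) ≠ 0 := Nat.cast_ne_zero.mpr hd.ne'
  obtain ⟨M, p, V, hp0, hp1, hVu, hPhi⟩ := hMU
  have key : ∀ i j : Fin k,
      (∑ l, (p l : ℂ) • (V l * Eij d k i j * (V l)ᴴ)) = C i j • Eij d k i j := by
    intro i j
    rw [← hPhi, deltaTensor_Eij hd C i j]
  -- block-diagonality of the unitaries with positive weight
  have hblock : ∀ l, 0 < p l → ∀ q s : Fin d × Fin k, q.2 ≠ s.2 → V l q s = 0 := by
    intro l hl q s hqs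
    have h1 : (∑ m, (p m : ℂ) • (V m * Eij d k s.2 s.2 * (V m)ᴴ)) q q
        = (C s.2 s.2 • Eij d k s.2 s.2) q q := by rw [key]
    have hR : (C s.2 s.2 • Eij d k s.2 s.2) q q = 0 := by
      simp [Eij, hqs]
    rw [hR] at h1
    simp only [Matrix.sum_apply, Matrix.smul_apply, smul_eq_mul, mul_Eij_apply] at h1
    have h2 : (∑ m, p m * ∑ c, Complex.normSq (V m q (c, s.2)) : ℝ) = 0 := by
      rw [← Complex.ofReal_inj]
      push_cast
      rw [← h1]
      refine Finset.sum_congr rfl fun m _ => ?_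
      congr 1
      refine Finset.sum_congr rfl fun c _ => ?_
      rw [Complex.star_def, Complex.mul_conj]
    have h3 : ∀ m ∈ Finset.univ, (0:ℝ) ≤ p m * ∑ c, Complex.normSq (V m q (c, s.2)) := by
      intro m _
      exact mul_nonneg (hp0 m) (Finset.sum_nonneg fun c _ => Complex.normSq_nonneg _)
    have h4 := (Finset.sum_eq_zero_iff_of_nonneg h3).mp h2 l (Finset.mem_univ l)
    have h5 : (∑ c, Complex.normSq (V l q (c, s.2)) : ℝ) = 0 := by
      rcases mul_eq_zero.mp h4 with h | h
      · exact absurd h hl.ne'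
      · exact h
    have h6 := (Finset.sum_eq_zero_iff_of_nonneg
      (fun c _ => Complex.normSq_nonneg (V l q (c, s.2)))).mp h5 s.1 (Finset.mem_univ s.1)
    have : V l q (s.1, s.2) = 0 := Complex.normSq_eq_zero.mp h6
    simpa using this
  -- the diagonal blocks are unitary
  have hUblock : ∀ l, 0 < p l → ∀ m : Fin k,
      (Matrix.of fun a b : Fin d => V l (a, m) (b, m)) ∈ Matrix.unitaryGroup (Fin d) ℂ := by
    intro l hl m
    rw [Matrix.mem_unitaryGroup_iff]
    have hVV : V l * star (V l) = 1 := Matrix.mem_unitaryGroup_iff.mp (hVu l)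
    ext a b
    have h1 : (V l * star (V l)) (a, m) (b, m) = (1 : Matrix (Fin d × Fin k) (Fin d × Fin k) ℂ) (a, m) (b, m) := by
      rw [hVV]
    rw [Matrix.mul_apply, Fintype.sum_prod_type] at h1
    have h2 : ∀ c : Fin d, (∑ m' : Fin k, V l (a, m) (c, m') * (star (V l)) (c, m') (b, m))
        = V l (a, m) (c, m) * star (V l (b, m) (c, m)) := by
      intro c
      rw [Finset.sum_eq_single m]
      · rw [Matrix.star_apply]
      · intro m' _ hm'
        rw [hblock l hl (a, m) (c, m') (by simpa using (Ne.symm hm')), zero_mul]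
      · intro h; exact absurd (Finset.mem_univ m) h
    rw [Finset.sum_congr rfl (fun c _ => h2 c)] at h1
    rw [Matrix.mul_apply]
    simp only [Matrix.star_apply, Matrix.of_apply]
    rw [h1, Matrix.one_apply, Matrix.one_apply]
    by_cases hab : a = b <;> simp [hab, Prod.ext_iff]
  -- the unitary family
  set Ufam : Fin M → Fin k → Matrix (Fin d) (Fin d) ℂ :=
    fun l m => if hl : 0 < p l then (Matrix.of fun a b : Fin d => V l (a, m) (b, m))ᴴ else 1
    with hUfam
  have hUfamU : ∀ l m, Ufam l m ∈ Matrix.unitaryGroup (Fin d) ℂ := by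
    intro l m
    rw [hUfam]
    by_cases hl : 0 < p l
    · simp only [hl, dif_pos]
      exact (Unitary.star_mem (hUblock l hl m) : _)
    · simp only [hl, dif_neg, not_false_iff]
      exact Submonoid.one_mem _
  set F : Fin M → Matrix (Fin k) (Fin k) ℂ :=
    fun l => Matrix.of fun i j => (d : ℂ)⁻¹ * ((Ufam l i)ᴴ * Ufam l j).trace with hF
  have hFmem : ∀ l, F l ∈ Fset d k := fun l => ⟨Ufam l, fun i => hUfamU l i, rfl⟩
  -- C is the convex combination of the F l
  have hsum : C = ∑ l, p l • F l := by
    ext i j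
    rw [Matrix.sum_apply]
    -- first derive the trace identity from `key`
    have h1 : ∀ a : Fin d, (∑ l, (p l : ℂ) • (V l * Eij d k i j * (V l)ᴴ)) (a, i) (a, j)
        = (C i j • Eij d k i j) (a, i) (a, j) := by intro a; rw [key]
    have h2 : (∑ a : Fin d, ∑ l, (p l : ℂ) *
        ∑ c : Fin d, V l (a, i) (c, i) * star (V l (a, j) (c, j))) = (d : ℂ) * C i j := by
      calc (∑ a : Fin d, ∑ l, (p l : ℂ) *
          ∑ c : Fin d, V l (a, i) (c, i) * star (V l (a, j) (c, j)))
          = ∑ a : Fin d, (C i j • Eij d k i j) (a, i) (a, j) := by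
            refine Finset.sum_congr rfl fun a _ => ?_
            rw [← h1 a]
            simp only [Matrix.sum_apply, Matrix.smul_apply, smul_eq_mul, mul_Eij_apply]
        _ = (d : ℂ) * C i j := by
            simp [Eij, Finset.sum_const, Finset.card_univ, mul_comm]
    have h3 : C i j = ∑ l, (p l : ℂ) * ((d : ℂ)⁻¹ *
        ∑ a : Fin d, ∑ c : Fin d, V l (a, i) (c, i) * star (V l (a, j) (c, j))) := by
      rw [Finset.sum_comm] at h2
      calc C i j = (d : ℂ)⁻¹ * ((d : ℂ) * C i j) := by
            rw [← mul_assoc, inv_mul_cancel₀ hdC, one_mul]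
        _ = (d : ℂ)⁻¹ * ∑ l, ∑ a : Fin d, (p l : ℂ) *
              ∑ c : Fin d, V l (a, i) (c, i) * star (V l (a, j) (c, j)) := by rw [h2]
        _ = ∑ l, (p l : ℂ) * ((d : ℂ)⁻¹ *
              ∑ a : Fin d, ∑ c : Fin d, V l (a, i) (c, i) * star (V l (a, j) (c, j))) := by
            rw [Finset.mul_sum]
            refine Finset.sum_congr rfl fun l _ => ?_
            rw [← Finset.mul_sum]
            ring
    rw [h3]
    refine Finset.sum_congr rfl fun l _ => ?_
    rcases lt_or_eq_of_le (hp0 l) with hl | hl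
    · have hFl : F l i j = (d : ℂ)⁻¹ *
          ∑ a : Fin d, ∑ c : Fin d, V l (a, i) (c, i) * star (V l (a, j) (c, j)) := by
        rw [hF]
        simp only [Matrix.of_apply]
        congr 1
        rw [hUfam]
        simp only [hl, dif_pos]
        rw [Matrix.conjTranspose_conjTranspose, Matrix.trace]
        simp only [Matrix.diag_apply, Matrix.mul_apply, Matrix.conjTranspose_apply,
          Matrix.of_apply]
      rw [Matrix.smul_apply, hFl]
      rw [Complex.real_smul]
    · rw [← hl]
      simp
  rw [hsum]
  have h1 : (∑ l, p l • F l) = Finset.univ.centerMass p F := by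
    rw [Finset.centerMass_eq_of_sum_1 _ _ hp1]
  rw [h1]
  exact Finset.centerMass_mem_convexHull _ (fun l _ => hp0 l)
    (by rw [hp1]; norm_num) (fun l _ => hFmem l)


end
end Paper
end

section
/- Let $d,k\in\mathbb{N}$ and let $C=(\operatorname{tr}_d(U_i U_j^*))_{i,j=1}^k$ for unitaries $U_1,\dots,U_k\in\mathcal{U}(d)$. Then $\delta_d\otimes S_C$ is a mixed unitary map on $M_d\otimes M_k$. Explicitly, letting $\{W_l\}_{l=1}^{d^2}$ enumerate the Weyl-Heisenberg unitaries in $\mathcal{U}(d)$ and setting $\widetilde{W}_{l,l'}=\bigoplus_{i=1}^k W_{l'}U_i W_l\in\mathcal{U}(dk)$, one has $(\delta_d\otimes S_C)(A)=d^{-4}\sum_{l,l'=1}^{d^2}\widetilde{W}_{l,l'} A \widetilde{W}_{l,l'}^*$ for all $A\in M_d\otimes M_k$. -/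
open scoped Matrix.Norms.L2Operator ComplexOrder

namespace Paper

noncomputable section
open Matrix

lemma S_pow {d : ℕ} (hd : 0 < d) (n : ℕ) :
    (Matrix.of fun i j : Fin d => if (i : ℕ) = ((j : ℕ) + 1) % d then (1:ℂ) else 0) ^ n
      = Matrix.of fun i j : Fin d => if (i : ℕ) = ((j : ℕ) + n) % d then 1 else 0 := by
  induction n with
  | zero =>
    ext i j
    simp only [pow_zero, Matrix.one_apply, Matrix.of_apply, Nat.add_zero,
      Nat.mod_eq_of_lt j.isLt, Fin.ext_iff]
  | succ n ih =>
    rw [pow_succ, ih]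
    ext i j
    rw [Matrix.mul_apply]
    have hc : ∀ x : Fin d, ((x : ℕ) = ((j : ℕ) + 1) % d) ↔ x = ⟨((j:ℕ)+1) % d, Nat.mod_lt _ hd⟩ := by
      intro x; rw [Fin.ext_iff]
    simp only [Matrix.of_apply, hc, mul_ite, mul_one, mul_zero, Finset.sum_ite_eq',
      Finset.mem_univ, if_true]
    have : (((j:ℕ)+1) % d + n) % d = ((j:ℕ) + (n+1)) % d := by
      rw [Nat.mod_add_mod]; ring_nf
    rw [this]


lemma conj_omega {d : ℕ} (hd : 0 < d) (ω : ℂ)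
    (hω : ω = Complex.exp (2 * Real.pi * Complex.I / d)) :
    (starRingEnd ℂ) ω = ω⁻¹ := by
  rw [hω, ← Complex.exp_conj, ← Complex.exp_neg]
  congr 1
  simp [map_div₀, Complex.conj_I, Complex.conj_ofNat]
  ring

lemma W_entry {d : ℕ} (hd : 0 < d) (ω : ℂ)
    (S D : Matrix (Fin d) (Fin d) ℂ)
    (hS : S = Matrix.of fun i j : Fin d => if (i : ℕ) = ((j : ℕ) + 1) % d then 1 else 0)
    (hD : D = Matrix.diagonal fun j : Fin d => ω ^ ((j : ℕ) + 1))
    (W : Fin d × Fin d → Matrix (Fin d) (Fin d) ℂ)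
    (hW : ∀ l, W l = S ^ (l.1 : ℕ) * D ^ (l.2 : ℕ)) (l : Fin d × Fin d) (a c : Fin d) :
    W l a c = (if (a : ℕ) = ((c : ℕ) + (l.1 : ℕ)) % d then 1 else 0)
      * ω ^ (((c : ℕ) + 1) * (l.2 : ℕ)) := by
  rw [hW, hS, hD, S_pow hd, Matrix.diagonal_pow, Matrix.mul_diagonal]
  simp [pow_mul]


lemma key {d : ℕ} (hd : 0 < d) (ω : ℂ)
    (hω : ω = Complex.exp (2 * Real.pi * Complex.I / d))
    (S D : Matrix (Fin d) (Fin d) ℂ)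
    (hS : S = Matrix.of fun i j : Fin d => if (i : ℕ) = ((j : ℕ) + 1) % d then 1 else 0)
    (hD : D = Matrix.diagonal fun j : Fin d => ω ^ ((j : ℕ) + 1))
    (W : Fin d × Fin d → Matrix (Fin d) (Fin d) ℂ)
    (hW : ∀ l, W l = S ^ (l.1 : ℕ) * D ^ (l.2 : ℕ)) (a b c c' : Fin d) :
    ∑ l : Fin d × Fin d, W l a c * (starRingEnd ℂ) (W l b c')
      = if a = b ∧ c = c' then (d : ℂ) else 0 := by
  haveI : NeZero d := ⟨hd.ne'⟩
  have hprim : IsPrimitiveRoot ω d := hω ▸ Complex.isPrimitiveRoot_exp d hd.ne'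
  have hω0 : ω ≠ 0 := hprim.ne_zero hd.ne'
  have hconj := conj_omega hd ω hω
  -- rewrite each summand as f s * g t
  have hterm : ∀ l : Fin d × Fin d,
      W l a c * (starRingEnd ℂ) (W l b c')
        = ((if (a : ℕ) = ((c : ℕ) + (l.1 : ℕ)) % d then 1 else 0)
            * (if (b : ℕ) = ((c' : ℕ) + (l.1 : ℕ)) % d then 1 else 0))
          * (ω ^ (((c : ℕ) + 1) * (l.2 : ℕ)) * (ω⁻¹) ^ (((c' : ℕ) + 1) * (l.2 : ℕ))) := by
    intro l
    rw [W_entry hd ω S D hS hD W hW, W_entry hd ω S D hS hD W hW, _root_.map_mul, _root_.map_pow, hconj]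
    have : (starRingEnd ℂ) (if (b : ℕ) = ((c' : ℕ) + (l.1 : ℕ)) % d then (1:ℂ) else 0)
        = (if (b : ℕ) = ((c' : ℕ) + (l.1 : ℕ)) % d then (1:ℂ) else 0) := by
      split <;> simp
    rw [this]; ring
  rw [Fintype.sum_prod_type]
  simp_rw [hterm]
  rw [← Finset.sum_mul_sum Finset.univ Finset.univ
    (fun s : Fin d => (if (a : ℕ) = ((c : ℕ) + (s : ℕ)) % d then (1:ℂ) else 0)
        * (if (b : ℕ) = ((c' : ℕ) + (s : ℕ)) % d then 1 else 0))
    (fun t : Fin d => ω ^ (((c : ℕ) + 1) * (t : ℕ)) * (ω⁻¹) ^ (((c' : ℕ) + 1) * (t : ℕ)))]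
  have hg : (∑ t : Fin d, ω ^ (((c : ℕ) + 1) * (t : ℕ)) * (ω⁻¹) ^ (((c' : ℕ) + 1) * (t : ℕ)))
      = if c = c' then (d : ℂ) else 0 := by
    by_cases hcc : c = c'
    · subst hcc
      simp only [if_true]
      have : ∀ t : Fin d, ω ^ (((c : ℕ) + 1) * (t : ℕ)) * (ω⁻¹) ^ (((c : ℕ) + 1) * (t : ℕ)) = 1 := by
        intro t
        rw [← mul_pow, mul_inv_cancel₀ hω0, one_pow]
      rw [Finset.sum_congr rfl (fun t _ => this t)]
      simp
    · rw [if_neg hcc]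
      set e : ℤ := ((c : ℕ) : ℤ) - ((c' : ℕ) : ℤ) with he
      have hterm2 : ∀ t : Fin d,
          ω ^ (((c : ℕ) + 1) * (t : ℕ)) * (ω⁻¹) ^ (((c' : ℕ) + 1) * (t : ℕ)) = (ω ^ e) ^ (t : ℕ) := by
        intro t
        rw [← zpow_natCast ω (((c : ℕ) + 1) * (t : ℕ)), ← zpow_natCast ω⁻¹ (((c' : ℕ) + 1) * (t : ℕ)),
          _root_.inv_zpow, ← _root_.zpow_neg, ← zpow_add₀ hω0, ← zpow_natCast (ω ^ e) (t : ℕ), ← _root_.zpow_mul]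
        congr 1
        push_cast
        ring
      rw [Finset.sum_congr rfl (fun t _ => hterm2 t)]
      have hx : ω ^ e ≠ 1 := by
        intro h
        rcases (hprim.zpow_eq_one_iff_dvd e).mp h with hdvd
        have : e = 0 := by
          refine Int.eq_zero_of_dvd_of_natAbs_lt_natAbs hdvd ?_
          have h1 : e.natAbs < d := by
            have := c.isLt; have := c'.isLt
            omega
          simpa using h1
        apply hcc
        apply Fin.ext
        omega
      rw [Fin.sum_univ_eq_sum_range (fun t => (ω ^ e) ^ t) d, geom_sum_eq hx]
      have : (ω ^ e) ^ d = 1 := by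
        rw [← zpow_natCast (ω ^ e) d, ← _root_.zpow_mul, mul_comm, _root_.zpow_mul, zpow_natCast, hprim.pow_eq_one,
          _root_.one_zpow]
      rw [this]
      simp
  rw [hg]
  by_cases hcc : c = c'
  · subst hcc
    have hf : (∑ s : Fin d, (if (a : ℕ) = ((c : ℕ) + (s : ℕ)) % d then (1:ℂ) else 0)
        * (if (b : ℕ) = ((c : ℕ) + (s : ℕ)) % d then 1 else 0)) = if a = b then 1 else 0 := by
      have hco : ∀ (x : Fin d) (s : Fin d), ((x : ℕ) = ((c : ℕ) + (s : ℕ)) % d) ↔ x = c + s := by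
        intro x s
        rw [Fin.ext_iff, Fin.val_add]
      simp_rw [hco]
      by_cases hab : a = b
      · subst hab
        simp only [if_pos rfl]
        have : ∀ s : Fin d, ((if a = c + s then (1:ℂ) else 0) * (if a = c + s then 1 else 0))
            = if s = a - c then 1 else 0 := by
          intro s
          have : (a = c + s) ↔ (s = a - c) := by
            constructor
            · intro h; rw [h]; abel
            · intro h; rw [h]; abel
          simp only [this]
          split <;> simp
        rw [Finset.sum_congr rfl (fun s _ => this s)]
        simp
      · rw [if_neg hab]
        have : ∀ s : Fin d, ((if a = c + s then (1:ℂ) else 0) * (if b = c + s then 1 else 0)) = 0 := by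
          intro s
          by_cases h1 : a = c + s
          · by_cases h2 : b = c + s
            · exact absurd (h1.trans h2.symm) hab
            · simp [h2]
          · simp [h1]
        rw [Finset.sum_congr rfl (fun s _ => this s)]
        simp
    rw [hf]
    by_cases hab : a = b <;> simp [hab]
  · simp [hcc]



variable {d : ℕ}

lemma swap3 {α : Type*} [Fintype α] (F : (Fin d × Fin d) → α → α → ℂ) :
    ∑ l : Fin d × Fin d, ∑ x : α, ∑ y : α, F l x y
      = ∑ x : α, ∑ y : α, ∑ l : Fin d × Fin d, F l x y := by
  rw [Finset.sum_comm]
  exact Finset.sum_congr rfl fun x _ => Finset.sum_comm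

lemma twirl1 (W : Fin d × Fin d → Matrix (Fin d) (Fin d) ℂ)
    (hkey : ∀ a b c c' : Fin d, ∑ l : Fin d × Fin d, W l a c * (starRingEnd ℂ) (W l b c')
      = if a = b ∧ c = c' then (d : ℂ) else 0)
    (X : Matrix (Fin d) (Fin d) ℂ) :
    ∑ l : Fin d × Fin d, W l * X * (W l)ᴴ = ((d : ℂ) * X.trace) • 1 := by
  ext a b
  simp only [Matrix.sum_apply, Matrix.mul_apply, Matrix.conjTranspose_apply, Complex.star_def, Finset.sum_mul]
  rw [swap3 (fun l c' c => W l a c * X c c' * (starRingEnd ℂ) (W l b c'))]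
  have h1 : ∀ (c' c : Fin d) (l : Fin d × Fin d),
      W l a c * X c c' * (starRingEnd ℂ) (W l b c')
        = X c c' * (W l a c * (starRingEnd ℂ) (W l b c')) := fun _ _ _ => by ring
  simp_rw [h1, ← Finset.mul_sum, hkey]
  by_cases hab : a = b
  · subst hab
    simp [Matrix.smul_apply, Matrix.one_apply, Matrix.trace, Matrix.diag, Finset.mul_sum,
      mul_comm]
  · simp [hab, Matrix.smul_apply, Matrix.one_apply]

lemma twirl2 (W : Fin d × Fin d → Matrix (Fin d) (Fin d) ℂ)
    (hkey : ∀ a b c c' : Fin d, ∑ l : Fin d × Fin d, W l a c * (starRingEnd ℂ) (W l b c')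
      = if a = b ∧ c = c' then (d : ℂ) else 0)
    (X : Matrix (Fin d) (Fin d) ℂ) :
    ∑ l : Fin d × Fin d, (W l)ᴴ * X * W l = ((d : ℂ) * X.trace) • 1 := by
  ext a b
  simp only [Matrix.sum_apply, Matrix.mul_apply, Matrix.conjTranspose_apply, Complex.star_def, Finset.sum_mul]
  rw [swap3 (fun l c' c => (starRingEnd ℂ) (W l c a) * X c c' * W l c' b)]
  have h1 : ∀ (c' c : Fin d) (l : Fin d × Fin d),
      (starRingEnd ℂ) (W l c a) * X c c' * W l c' b
        = X c c' * (W l c' b * (starRingEnd ℂ) (W l c a)) := fun _ _ _ => by ring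
  simp_rw [h1, ← Finset.mul_sum, hkey]
  by_cases hab : a = b
  · subst hab
    simp only [Matrix.smul_apply, Matrix.one_apply, if_pos rfl]
    rw [Finset.sum_comm]
    simp [Matrix.trace, Matrix.diag, Finset.mul_sum, mul_comm, and_comm, eq_comm]
  · have hba : ¬ b = a := fun h => hab h.symm
    simp [hab, hba, Matrix.smul_apply, Matrix.one_apply]


lemma mainsum (W : Fin d × Fin d → Matrix (Fin d) (Fin d) ℂ)
    (hkey : ∀ a b c c' : Fin d, ∑ l : Fin d × Fin d, W l a c * (starRingEnd ℂ) (W l b c')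
      = if a = b ∧ c = c' then (d : ℂ) else 0)
    (M N B : Matrix (Fin d) (Fin d) ℂ) :
    ∑ l : Fin d × Fin d, ∑ l' : Fin d × Fin d, (W l' * M * W l) * B * (W l' * N * W l)ᴴ
      = ((d : ℂ) * ((d : ℂ) * B.trace) * (Nᴴ * M).trace) • 1 := by
  have h1 : ∀ l l' : Fin d × Fin d, (W l' * M * W l) * B * (W l' * N * W l)ᴴ
      = W l' * (M * (W l * B * (W l)ᴴ) * Nᴴ) * (W l')ᴴ := by
    intro l l'
    simp only [Matrix.conjTranspose_mul, Matrix.mul_assoc]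
  simp_rw [h1]
  have h2 : ∀ l : Fin d × Fin d,
      ∑ l' : Fin d × Fin d, W l' * (M * (W l * B * (W l)ᴴ) * Nᴴ) * (W l')ᴴ
        = ((d : ℂ) * (M * (W l * B * (W l)ᴴ) * Nᴴ).trace) • 1 := fun l => twirl1 W hkey _
  simp_rw [h2]
  have h3 : ∀ l : Fin d × Fin d, (M * (W l * B * (W l)ᴴ) * Nᴴ).trace
      = (Nᴴ * M * (W l * B * (W l)ᴴ)).trace := by
    intro l
    rw [Matrix.trace_mul_comm]
    simp [Matrix.mul_assoc]
  simp_rw [h3]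
  rw [← Finset.sum_smul, ← Finset.mul_sum, ← Matrix.trace_sum, ← Finset.mul_sum,
    twirl1 W hkey B]
  rw [Matrix.mul_smul, Matrix.mul_one, Matrix.trace_smul]
  simp [smul_eq_mul]
  ring_nf



lemma fin_succ_iff {d : ℕ} [NeZero d] (x m : Fin d) :
    ((x : ℕ) = ((m : ℕ) + 1) % d) ↔ x = m + 1 := by
  rw [Fin.ext_iff, Fin.val_add, Fin.val_one', Nat.add_mod (m:ℕ) 1 d, Nat.mod_eq_of_lt m.isLt]

lemma S_unitary {d : ℕ} (hd : 0 < d) :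
    (Matrix.of fun i j : Fin d => if (i : ℕ) = ((j : ℕ) + 1) % d then (1:ℂ) else 0)
      ∈ Matrix.unitaryGroup (Fin d) ℂ := by
  haveI : NeZero d := ⟨hd.ne'⟩
  rw [Matrix.mem_unitaryGroup_iff']
  ext i j
  rw [Matrix.star_eq_conjTranspose, Matrix.mul_apply, Matrix.one_apply]
  simp only [Matrix.conjTranspose_apply, Matrix.of_apply, fin_succ_iff, Complex.star_def]
  have hterm : ∀ x : Fin d,
      (starRingEnd ℂ) (if x = i + 1 then (1:ℂ) else 0) * (if x = j + 1 then (1:ℂ) else 0)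
        = if x = j + 1 then (if i = j then (1:ℂ) else 0) else 0 := by
    intro x
    by_cases h1 : x = j + 1
    · subst h1
      by_cases h2 : i = j
      · simp [h2]
      · have : ¬ (j + 1 = i + 1) := fun h => h2 (add_right_cancel h).symm
        simp [this, h2]
    · simp [h1]
  simp_rw [hterm]
  simp


lemma D_unitary {d : ℕ} (hd : 0 < d) (ω : ℂ)
    (hω : ω = Complex.exp (2 * Real.pi * Complex.I / d)) :
    (Matrix.diagonal fun j : Fin d => ω ^ ((j : ℕ) + 1)) ∈ Matrix.unitaryGroup (Fin d) ℂ := by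
  have hprim : IsPrimitiveRoot ω d := hω ▸ Complex.isPrimitiveRoot_exp d hd.ne'
  have hω0 : ω ≠ 0 := hprim.ne_zero hd.ne'
  have hconj : (starRingEnd ℂ) ω = ω⁻¹ := by
    rw [hω, ← Complex.exp_conj, ← Complex.exp_neg]
    congr 1
    simp [map_div₀, Complex.conj_I, Complex.conj_ofNat]
    ring
  rw [Matrix.mem_unitaryGroup_iff', Matrix.star_eq_conjTranspose,
    Matrix.diagonal_conjTranspose, Matrix.diagonal_mul_diagonal]
  have hfun : (fun i : Fin d => (star ((fun j : Fin d => ω ^ ((j : ℕ) + 1)) : Fin d → ℂ)) i * ω ^ ((i : ℕ) + 1)) = fun _ => (1:ℂ) := by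
    funext i
    simp only [Pi.star_apply, Complex.star_def, map_pow, hconj]
    rw [← mul_pow, inv_mul_cancel₀ hω0, one_pow]
  rw [hfun, Matrix.diagonal_one]

lemma W_unitary {d : ℕ} (hd : 0 < d) (ω : ℂ)
    (hω : ω = Complex.exp (2 * Real.pi * Complex.I / d))
    (S D : Matrix (Fin d) (Fin d) ℂ)
    (hS : S = Matrix.of fun i j : Fin d => if (i : ℕ) = ((j : ℕ) + 1) % d then 1 else 0)
    (hD : D = Matrix.diagonal fun j : Fin d => ω ^ ((j : ℕ) + 1))
    (W : Fin d × Fin d → Matrix (Fin d) (Fin d) ℂ)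
    (hW : ∀ l, W l = S ^ (l.1 : ℕ) * D ^ (l.2 : ℕ)) (l : Fin d × Fin d) :
    W l ∈ Matrix.unitaryGroup (Fin d) ℂ := by
  rw [hW]
  exact mul_mem (pow_mem (hS ▸ S_unitary hd) _) (pow_mem (hD ▸ D_unitary hd ω hω) _)

lemma Wt_unitary {d k : ℕ}
    (W : Fin d × Fin d → Matrix (Fin d) (Fin d) ℂ)
    (hWu : ∀ l, W l ∈ Matrix.unitaryGroup (Fin d) ℂ)
    (U : Fin k → Matrix (Fin d) (Fin d) ℂ)
    (hU : ∀ i, U i ∈ Matrix.unitaryGroup (Fin d) ℂ)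
    (Wt : (Fin d × Fin d) → (Fin d × Fin d) → Matrix (Fin d × Fin k) (Fin d × Fin k) ℂ)
    (hWt : ∀ l l', Wt l l' =
      Matrix.of fun p q => (if p.2 = q.2 then (W l' * U p.2 * W l) p.1 q.1 else 0))
    (l l' : Fin d × Fin d) :
    Wt l l' ∈ Matrix.unitaryGroup (Fin d × Fin k) ℂ := by
  have hM : ∀ i : Fin k, (W l' * U i * W l) ∈ Matrix.unitaryGroup (Fin d) ℂ :=
    fun i => mul_mem (mul_mem (hWu l') (hU i)) (hWu l)
  have hM1 : ∀ i : Fin k, (W l' * U i * W l)ᴴ * (W l' * U i * W l) = 1 := by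
    intro i
    have := Matrix.mem_unitaryGroup_iff'.mp (hM i)
    rwa [Matrix.star_eq_conjTranspose] at this
  rw [Matrix.mem_unitaryGroup_iff']
  ext ⟨a, i⟩ ⟨b, j⟩
  rw [Matrix.star_eq_conjTranspose, Matrix.mul_apply, Matrix.one_apply, hWt]
  rw [Fintype.sum_prod_type]
  by_cases hij : i = j
  · subst hij
    have hsum : ∀ x : Fin d, ∑ m : Fin k,
        ((Matrix.of fun p q : Fin d × Fin k =>
          (if p.2 = q.2 then (W l' * U p.2 * W l) p.1 q.1 else 0))ᴴ (a, i) (x, m)) *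
        ((Matrix.of fun p q : Fin d × Fin k =>
          (if p.2 = q.2 then (W l' * U p.2 * W l) p.1 q.1 else 0)) (x, m) (b, i))
        = (starRingEnd ℂ) ((W l' * U i * W l) x a) * ((W l' * U i * W l) x b) := by
      intro x
      rw [Finset.sum_eq_single i]
      · simp [Matrix.conjTranspose_apply]
      · intro m _ hmi
        simp [Matrix.conjTranspose_apply, hmi]
      · simp
    rw [Finset.sum_congr rfl (fun x _ => hsum x)]
    have := congrFun (congrFun (hM1 i) a) b
    rw [Matrix.mul_apply, Matrix.one_apply] at this
    simp only [Matrix.conjTranspose_apply, Complex.star_def] at this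
    rw [this]
    simp [Prod.ext_iff]
  · have hz : ∀ x : Fin d, ∑ m : Fin k,
        ((Matrix.of fun p q : Fin d × Fin k =>
          (if p.2 = q.2 then (W l' * U p.2 * W l) p.1 q.1 else 0))ᴴ (a, i) (x, m)) *
        ((Matrix.of fun p q : Fin d × Fin k =>
          (if p.2 = q.2 then (W l' * U p.2 * W l) p.1 q.1 else 0)) (x, m) (b, j)) = 0 := by
      intro x
      apply Finset.sum_eq_zero
      intro m _
      by_cases hmi : m = i
      · subst hmi
        simp [Matrix.conjTranspose_apply, hij]
      · simp [Matrix.conjTranspose_apply, hmi]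
    rw [Finset.sum_congr rfl (fun x _ => hz x)]
    simp [Prod.ext_iff, hij]



lemma block_entry {d k : ℕ}
    (W : Fin d × Fin d → Matrix (Fin d) (Fin d) ℂ)
    (U : Fin k → Matrix (Fin d) (Fin d) ℂ)
    (Wt : (Fin d × Fin d) → (Fin d × Fin d) → Matrix (Fin d × Fin k) (Fin d × Fin k) ℂ)
    (hWt : ∀ l l', Wt l l' =
      Matrix.of fun p q => (if p.2 = q.2 then (W l' * U p.2 * W l) p.1 q.1 else 0))
    (l l' : Fin d × Fin d) (A : Matrix (Fin d × Fin k) (Fin d × Fin k) ℂ)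
    (a b : Fin d) (i j : Fin k) :
    (Wt l l' * A * (Wt l l')ᴴ) (a, i) (b, j)
      = ((W l' * U i * W l) * (Matrix.of fun c c' => A (c, i) (c', j))
          * (W l' * U j * W l)ᴴ) a b := by
  have e1 : ∀ (p r : Fin d × Fin k), Wt l l' p r
      = if p.2 = r.2 then (W l' * U p.2 * W l) p.1 r.1 else 0 := by
    intro p r; rw [hWt]; rfl
  have e2 : ∀ r : Fin d × Fin k, (Wt l l' * A) (a, i) r
      = ∑ c : Fin d, (W l' * U i * W l) a c * A (c, i) r := by
    intro r
    rw [Matrix.mul_apply, Fintype.sum_prod_type]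
    apply Finset.sum_congr rfl
    intro c _
    simp_rw [e1]
    simp [ite_mul, zero_mul, Finset.sum_ite_eq]
  have e3 : ∀ c' : Fin d, ∑ j' : Fin k,
      (Wt l l' * A) (a, i) (c', j') * (Wt l l')ᴴ (c', j') (b, j)
        = (∑ c : Fin d, (W l' * U i * W l) a c * A (c, i) (c', j))
            * star ((W l' * U j * W l) b c') := by
    intro c'
    simp_rw [Matrix.conjTranspose_apply, e1, e2]
    simp [apply_ite (star : ℂ → ℂ), mul_ite, mul_zero, Finset.sum_ite_eq]
  rw [Matrix.mul_apply, Fintype.sum_prod_type]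
  rw [Finset.sum_congr rfl (fun c' _ => e3 c')]
  rw [Matrix.mul_apply]
  apply Finset.sum_congr rfl
  intro c' _
  rw [Matrix.conjTranspose_apply]
  congr 1

/-- If `C = (tr_d(Uᵢ Uⱼ*))` for unitaries `Uᵢ ∈ U(d)`, then
`δ_d ⊗ S_C` is mixed unitary, implemented explicitly by the unitaries
`W̃_{l,l'} = ⊕ᵢ W_{l'} Uᵢ W_l` built from the Weyl–Heisenberg unitaries. -/
theorem stmt4 (d k : ℕ) (hd : 0 < d) (ω : ℂ)
    (hω : ω = Complex.exp (2 * Real.pi * Complex.I / d))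
    (S D : Matrix (Fin d) (Fin d) ℂ)
    (hS : S = Matrix.of fun i j : Fin d => if (i : ℕ) = ((j : ℕ) + 1) % d then 1 else 0)
    (hD : D = Matrix.diagonal fun j : Fin d => ω ^ ((j : ℕ) + 1))
    (W : Fin d × Fin d → Matrix (Fin d) (Fin d) ℂ)
    (hW : ∀ l, W l = S ^ (l.1 : ℕ) * D ^ (l.2 : ℕ))
    (U : Fin k → Matrix (Fin d) (Fin d) ℂ)
    (hU : ∀ i, U i ∈ Matrix.unitaryGroup (Fin d) ℂ)
    (C : Matrix (Fin k) (Fin k) ℂ)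
    (hC : C = Matrix.of fun i j => (d : ℂ)⁻¹ * (U i * (U j)ᴴ).trace)
    (Wt : (Fin d × Fin d) → (Fin d × Fin d) → Matrix (Fin d × Fin k) (Fin d × Fin k) ℂ)
    (hWt : ∀ l l', Wt l l' =
      Matrix.of fun p q => (if p.2 = q.2 then (W l' * U p.2 * W l) p.1 q.1 else 0)) :
    (∀ A : Matrix (Fin d × Fin k) (Fin d × Fin k) ℂ,
      deltaTensor d k (schur C) A
        = ((d : ℂ) ^ 4)⁻¹ • ∑ l : Fin d × Fin d, ∑ l' : Fin d × Fin d,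
            Wt l l' * A * (Wt l l')ᴴ) ∧
    MixedUnitary (deltaTensor d k (schur C)) := by

  have hdC : (d : ℂ) ≠ 0 := Nat.cast_ne_zero.mpr hd.ne'
  have hkey := key hd ω hω S D hS hD W hW
  have hmain : ∀ A : Matrix (Fin d × Fin k) (Fin d × Fin k) ℂ,
      deltaTensor d k (schur C) A
        = ((d : ℂ) ^ 4)⁻¹ • ∑ l : Fin d × Fin d, ∑ l' : Fin d × Fin d,
            Wt l l' * A * (Wt l l')ᴴ := by
    intro A
    ext ⟨a, i⟩ ⟨b, j⟩
    have hblock : ∀ l l' : Fin d × Fin d,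
        (Wt l l' * A * (Wt l l')ᴴ) (a, i) (b, j)
          = ((W l' * U i * W l) * (Matrix.of fun c c' => A (c, i) (c', j))
              * (W l' * U j * W l)ᴴ) a b := fun l l' => block_entry W U Wt hWt l l' A a b i j
    have hsum := mainsum W hkey (U i) (U j) (Matrix.of fun c c' => A (c, i) (c', j))
    rw [Matrix.smul_apply]
    rw [show (∑ l : Fin d × Fin d, ∑ l' : Fin d × Fin d, Wt l l' * A * (Wt l l')ᴴ) (a, i) (b, j)
        = ∑ l : Fin d × Fin d, ∑ l' : Fin d × Fin d, (Wt l l' * A * (Wt l l')ᴴ) (a, i) (b, j) from by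
      simp [Matrix.sum_apply]]
    simp_rw [hblock]
    rw [show (∑ l : Fin d × Fin d, ∑ l' : Fin d × Fin d,
          ((W l' * U i * W l) * (Matrix.of fun c c' => A (c, i) (c', j))
              * (W l' * U j * W l)ᴴ) a b)
        = (∑ l : Fin d × Fin d, ∑ l' : Fin d × Fin d,
            (W l' * U i * W l) * (Matrix.of fun c c' => A (c, i) (c', j))
              * (W l' * U j * W l)ᴴ) a b from by simp [Matrix.sum_apply]]
    rw [hsum, Matrix.smul_apply, Matrix.one_apply]
    have htr : (Matrix.of fun c c' => A (c, i) (c', j)).trace = ∑ c : Fin d, A (c, i) (c, j) := by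
      simp [Matrix.trace, Matrix.diag]
    have htr2 : ((U j)ᴴ * U i).trace = (U i * (U j)ᴴ).trace := Matrix.trace_mul_comm _ _
    rw [htr, htr2]
    simp only [deltaTensor, schur, hC, Matrix.of_apply]
    by_cases hab : a = b
    · simp only [hab, if_pos rfl, smul_eq_mul]
      field_simp
    · simp [hab]
  refine ⟨hmain, ?_⟩
  have hWu : ∀ l, W l ∈ Matrix.unitaryGroup (Fin d) ℂ := W_unitary hd ω hω S D hS hD W hW
  set ι := (Fin d × Fin d) × (Fin d × Fin d) with hι
  let e : Fin (Fintype.card ι) ≃ ι := (Fintype.equivFin ι).symm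
  refine ⟨Fintype.card ι, fun _ => (((d : ℝ) ^ 4)⁻¹), fun l => Wt (e l).1 (e l).2, ?_, ?_, ?_, ?_⟩
  · intro l; positivity
  · rw [Finset.sum_const]
    simp only [Finset.card_univ, Fintype.card_fin, hι, Fintype.card_prod, Fintype.card_fin,
      nsmul_eq_mul]
    push_cast
    have : (d : ℝ) ≠ 0 := Nat.cast_ne_zero.mpr hd.ne'
    field_simp
  · intro l
    exact Wt_unitary W hWu U hU Wt hWt (e l).1 (e l).2
  · intro X
    rw [hmain X]
    have hre : ∑ l : Fin (Fintype.card ι),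
        ((((d : ℝ) ^ 4)⁻¹ : ℝ) : ℂ) • (Wt (e l).1 (e l).2 * X * (Wt (e l).1 (e l).2)ᴴ)
          = ∑ x : ι, ((((d : ℝ) ^ 4)⁻¹ : ℝ) : ℂ) • (Wt x.1 x.2 * X * (Wt x.1 x.2)ᴴ) :=
      Equiv.sum_comp e (fun x : ι => ((((d : ℝ) ^ 4)⁻¹ : ℝ) : ℂ) • (Wt x.1 x.2 * X * (Wt x.1 x.2)ᴴ))
    refine Eq.trans ?_ hre.symm
    have hc : ((((d : ℝ) ^ 4)⁻¹ : ℝ) : ℂ) = ((d : ℂ) ^ 4)⁻¹ := by push_cast; ring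
    simp_rw [hc, ← Finset.smul_sum]
    congr 1
    rw [show (∑ x : ι, Wt x.1 x.2 * X * (Wt x.1 x.2)ᴴ)
        = ∑ l : Fin d × Fin d, ∑ l' : Fin d × Fin d, Wt l l' * X * (Wt l l')ᴴ from
      Fintype.sum_prod_type (f := fun x : ι => Wt x.1 x.2 * X * (Wt x.1 x.2)ᴴ)]

end
end Paper
end

section
/- Let $d,k\in\mathbb{N}$ and let $R\colon M_k\to M_k$ be a linear map. Then the operator norm of $\delta_d\otimes R\colon M_d\otimes M_k\to M_d\otimes M_k$ equals the operator norm of $R$. -/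
open scoped Matrix.Norms.L2Operator ComplexOrder

namespace Paper

noncomputable section
open Matrix

/-! ### Auxiliary definitions and lemmas for `stmt7` -/

section Stmt7Aux
variable {d k : ℕ}

/-- The isometric embedding of the `a`-th block. -/
def emb (d k : ℕ) (a : Fin d) : Matrix (Fin d × Fin k) (Fin k) ℂ :=
  Matrix.of fun p j => if p = (a, j) then 1 else 0

/-- `1 ⊗ B` as an explicit matrix. -/
def kron (d : ℕ) {k : ℕ} (B : Matrix (Fin k) (Fin k) ℂ) :
    Matrix (Fin d × Fin k) (Fin d × Fin k) ℂ :=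
  Matrix.of fun p q => (if p.1 = q.1 then 1 else 0) * B p.2 q.2

/-- The normalized partial trace over the first factor. -/
def ptr (d : ℕ) {k : ℕ} (A : Matrix (Fin d × Fin k) (Fin d × Fin k) ℂ) :
    Matrix (Fin k) (Fin k) ℂ :=
  Matrix.of fun i j => (d : ℂ)⁻¹ * ∑ a : Fin d, A (a, i) (a, j)

lemma emb_conjT_mul_emb (a : Fin d) : (emb d k a)ᴴ * emb d k a = 1 := by
  ext i j
  simp [emb, Matrix.mul_apply, Matrix.conjTranspose_apply, Fintype.sum_prod_type,
    Prod.ext_iff, Matrix.one_apply, apply_ite, ite_and, eq_comm]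

lemma compress (a : Fin d) (A : Matrix (Fin d × Fin k) (Fin d × Fin k) ℂ) :
    (emb d k a)ᴴ * A * emb d k a = Matrix.of fun i j => A (a, i) (a, j) := by
  ext i j
  simp [emb, Matrix.mul_apply, Matrix.conjTranspose_apply, Fintype.sum_prod_type,
    Prod.ext_iff, apply_ite, ite_and, eq_comm]

lemma norm_one_le_one : ‖(1 : Matrix (Fin k) (Fin k) ℂ)‖ ≤ 1 := by
  have h := Matrix.l2_opNorm_conjTranspose_mul_self (1 : Matrix (Fin k) (Fin k) ℂ)
  simp only [Matrix.conjTranspose_one, one_mul] at h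
  nlinarith [norm_nonneg (1 : Matrix (Fin k) (Fin k) ℂ)]

lemma norm_emb_le (a : Fin d) : ‖emb d k a‖ ≤ 1 := by
  have h := Matrix.l2_opNorm_conjTranspose_mul_self (emb d k a)
  rw [emb_conjT_mul_emb] at h
  nlinarith [norm_nonneg (emb d k a), norm_one_le_one (k := k)]

lemma norm_compress_le (a : Fin d) (A : Matrix (Fin d × Fin k) (Fin d × Fin k) ℂ) :
    ‖(emb d k a)ᴴ * A * emb d k a‖ ≤ ‖A‖ := by
  have h1 := Matrix.l2_opNorm_mul ((emb d k a)ᴴ * A) (emb d k a)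
  have h2 := Matrix.l2_opNorm_mul (emb d k a)ᴴ A
  have h3 : ‖(emb d k a)ᴴ‖ = ‖emb d k a‖ := Matrix.l2_opNorm_conjTranspose _
  have h4 := norm_emb_le a (k := k)
  have h5 := norm_nonneg A
  have h6 := norm_nonneg (emb d k a)
  have h7 := norm_nonneg ((emb d k a)ᴴ * A)
  nlinarith

lemma norm_kron_le (B : Matrix (Fin k) (Fin k) ℂ) : ‖kron d B‖ ≤ ‖B‖ := by
  rw [Matrix.l2_opNorm_def]
  refine ContinuousLinearMap.opNorm_le_bound _ (norm_nonneg B) fun z => ?_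
  have happ : ∀ a : Fin d, ∀ i : Fin k,
      ((kron d B) *ᵥ (WithLp.equiv 2 _ z)) (a, i) = (B *ᵥ fun j => z (a, j)) i := by
    intro a i
    simp [kron, Matrix.mulVec, dotProduct, Fintype.sum_prod_type, ite_mul, zero_mul,
      mul_assoc, Finset.sum_ite_eq, Finset.sum_ite_eq']
  have hsq : ‖(LinearEquiv.trans Matrix.toEuclideanLin LinearMap.toContinuousLinearMap)
      (kron d B) z‖ ^ 2 ≤ (‖B‖ * ‖z‖) ^ 2 := by
    have lhs_eq : ‖(LinearEquiv.trans Matrix.toEuclideanLin LinearMap.toContinuousLinearMap)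
        (kron d B) z‖ ^ 2 = ∑ a : Fin d, ∑ i : Fin k, ‖(B *ᵥ fun j => z (a, j)) i‖ ^ 2 := by
      rw [EuclideanSpace.norm_eq, Real.sq_sqrt (by positivity), Fintype.sum_prod_type]
      exact Finset.sum_congr rfl fun a _ => Finset.sum_congr rfl fun i _ => by
        rw [show ((LinearEquiv.trans Matrix.toEuclideanLin LinearMap.toContinuousLinearMap)
          (kron d B) z) (a, i) = ((kron d B) *ᵥ (WithLp.equiv 2 _ z)) (a, i) from rfl, happ a i]
    rw [lhs_eq]
    have hblock : ∀ a : Fin d, ∑ i : Fin k, ‖(B *ᵥ fun j => z (a, j)) i‖ ^ 2 ≤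
        ‖B‖ ^ 2 * ∑ j : Fin k, ‖z (a, j)‖ ^ 2 := by
      intro a
      have hv := Matrix.l2_opNorm_mulVec B ((WithLp.equiv 2 (Fin k → ℂ)).symm fun j => z (a, j))
      have h1 : ‖(EuclideanSpace.equiv (Fin k) ℂ).symm
          (B *ᵥ ((WithLp.equiv 2 (Fin k → ℂ)).symm fun j => z (a, j)))‖ ^ 2 =
          ∑ i : Fin k, ‖(B *ᵥ fun j => z (a, j)) i‖ ^ 2 := by
        rw [EuclideanSpace.norm_eq, Real.sq_sqrt (by positivity)]; rfl
      have h2 : ‖(WithLp.equiv 2 (Fin k → ℂ)).symm fun j => z (a, j)‖ ^ 2 =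
          ∑ j : Fin k, ‖z (a, j)‖ ^ 2 := by
        rw [EuclideanSpace.norm_eq, Real.sq_sqrt (by positivity)]; rfl
      calc ∑ i : Fin k, ‖(B *ᵥ fun j => z (a, j)) i‖ ^ 2 = _ := h1.symm
        _ ≤ (‖B‖ * ‖(WithLp.equiv 2 (Fin k → ℂ)).symm fun j => z (a, j)‖) ^ 2 := by
            apply pow_le_pow_left₀ (norm_nonneg _) hv
        _ = ‖B‖ ^ 2 * ∑ j : Fin k, ‖z (a, j)‖ ^ 2 := by rw [mul_pow, h2]
    calc ∑ a : Fin d, ∑ i : Fin k, ‖(B *ᵥ fun j => z (a, j)) i‖ ^ 2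
        ≤ ∑ a : Fin d, ‖B‖ ^ 2 * ∑ j : Fin k, ‖z (a, j)‖ ^ 2 :=
          Finset.sum_le_sum fun a _ => hblock a
      _ = ‖B‖ ^ 2 * ∑ a : Fin d, ∑ j : Fin k, ‖z (a, j)‖ ^ 2 := by rw [Finset.mul_sum]
      _ = (‖B‖ * ‖z‖) ^ 2 := by
          rw [mul_pow, EuclideanSpace.norm_eq, Real.sq_sqrt (by positivity),
            Fintype.sum_prod_type]
  have := Real.sqrt_le_sqrt hsq
  rwa [Real.sqrt_sq (norm_nonneg _), Real.sqrt_sq (by positivity)] at this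

lemma compress_kron (a : Fin d) (B : Matrix (Fin k) (Fin k) ℂ) :
    (emb d k a)ᴴ * kron d B * emb d k a = B := by
  rw [compress]
  ext i j
  simp [kron]

lemma norm_kron (hd : 0 < d) (B : Matrix (Fin k) (Fin k) ℂ) : ‖kron d B‖ = ‖B‖ := by
  refine le_antisymm (norm_kron_le B) ?_
  have h := norm_compress_le (⟨0, hd⟩ : Fin d) (kron d B)
  rwa [compress_kron] at h

lemma ptr_eq_smul_sum (A : Matrix (Fin d × Fin k) (Fin d × Fin k) ℂ) :
    ptr d A = (d : ℂ)⁻¹ • ∑ a : Fin d, (emb d k a)ᴴ * A * emb d k a := by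
  ext i j
  simp [ptr, compress, Finset.mul_sum, Matrix.sum_apply]

lemma norm_ptr_le (hd : 0 < d) (A : Matrix (Fin d × Fin k) (Fin d × Fin k) ℂ) :
    ‖ptr d A‖ ≤ ‖A‖ := by
  rw [ptr_eq_smul_sum, norm_smul]
  have h1 : ‖((d : ℂ)⁻¹)‖ = (d : ℝ)⁻¹ := by
    rw [norm_inv, Complex.norm_natCast]
  rw [h1]
  have h2 : ‖∑ a : Fin d, (emb d k a)ᴴ * A * emb d k a‖ ≤ (d : ℝ) * ‖A‖ := by
    calc ‖∑ a : Fin d, (emb d k a)ᴴ * A * emb d k a‖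
        ≤ ∑ a : Fin d, ‖(emb d k a)ᴴ * A * emb d k a‖ := norm_sum_le _ _
      _ ≤ ∑ _a : Fin d, ‖A‖ := Finset.sum_le_sum fun a _ => norm_compress_le a A
      _ = (d : ℝ) * ‖A‖ := by simp [Finset.sum_const, mul_comm]
  calc (d : ℝ)⁻¹ * ‖∑ a : Fin d, (emb d k a)ᴴ * A * emb d k a‖
      ≤ (d : ℝ)⁻¹ * ((d : ℝ) * ‖A‖) := by
        apply mul_le_mul_of_nonneg_left h2 (by positivity)
    _ = ‖A‖ := by
        field_simp

lemma ptr_kron (hd : 0 < d) (X : Matrix (Fin k) (Fin k) ℂ) : ptr d (kron d X) = X := by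
  ext i j
  have hd' : (d : ℂ) ≠ 0 := Nat.cast_ne_zero.mpr hd.ne'
  simp [ptr, kron, Finset.sum_const, mul_comm]
  field_simp

lemma deltaTensor_eq (d k : ℕ) (T : Matrix (Fin k) (Fin k) ℂ → Matrix (Fin k) (Fin k) ℂ)
    (A : Matrix (Fin d × Fin k) (Fin d × Fin k) ℂ) :
    deltaTensor d k T A = kron d (T (ptr d A)) := rfl

end Stmt7Aux

/-- For a linear map `R : M_k → M_k`, the operator norm of
`δ_d ⊗ R` equals the operator norm of `R`. -/
theorem stmt7 (d k : ℕ) (hd : 0 < d)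
    (R : Matrix (Fin k) (Fin k) ℂ →ₗ[ℂ] Matrix (Fin k) (Fin k) ℂ) :
    opNorm (deltaTensor d k (⇑R)) = opNorm (⇑R) := by
  unfold opNorm
  congr 1
  ext r
  constructor
  · rintro ⟨A, hA, rfl⟩
    refine ⟨ptr d A, le_trans (norm_ptr_le hd A) hA, ?_⟩
    rw [deltaTensor_eq, norm_kron hd]
  · rintro ⟨X, hX, rfl⟩
    refine ⟨kron d X, ?_, ?_⟩
    · rw [norm_kron hd]; exact hX
    · rw [deltaTensor_eq, ptr_kron hd, norm_kron hd]

end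
end Paper
end

section
/- Let $T\colon M_k\to M_k$ be completely positive and define $\gamma(X)=\int\!\!\int D_1^* T(D_1 X D_2) D_2^*\, dD_1\, dD_2$, where both integrals run over the group of diagonal unitary matrices in $M_k$ with respect to Haar (Lebesgue) measure on $\mathbb{T}^k$. Then $\gamma=S_B$ is the Schur multiplier by the matrix $B=(b_{i,j})$ with $b_{i,j}=T(E_{i,j})_{i,j}$, $B$ is positive semidefinite, and hence $\gamma$ is completely positive. -/
open scoped Matrix.Norms.L2Operator ComplexOrder

namespace Paper

noncomputable section
open Matrix

open MeasureTheory

lemma star_exp_real (r : ℝ) : star (Complex.exp ((r:ℂ) * Complex.I)) =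
    Complex.exp (-((r:ℂ) * Complex.I)) := by
  rw [Complex.star_def, ← Complex.exp_conj]
  congr 1
  simp [Complex.conj_ofReal]

lemma restrict_pi_pi {ι : Type*} [Fintype ι] {α : ι → Type*} [∀ i, MeasurableSpace (α i)]
    (μ : ∀ i, Measure (α i)) [∀ i, SigmaFinite (μ i)] (s : ∀ i, Set (α i))
    (hs : ∀ i, MeasurableSet (s i)) :
    (Measure.pi μ).restrict (Set.univ.pi s) = Measure.pi (fun i => (μ i).restrict (s i)) := by
  symm
  apply Measure.pi_eq
  intro t ht
  rw [Measure.restrict_apply (MeasurableSet.univ_pi ht), ← Set.pi_inter_distrib,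
    Measure.pi_pi]
  exact Finset.prod_congr rfl fun i _ => (Measure.restrict_apply (ht i)).symm

lemma integral_pi_prod {ι : Type*} [Fintype ι] (μ : Measure ℝ) (hμ : SigmaFinite μ)
    (g : ι → ℝ → ℂ) :
    ∫ x : ι → ℝ, ∏ i, g i (x i) ∂(Measure.pi fun _ => μ) = ∏ i, ∫ t, g i t ∂μ := by
  letI : MeasureSpace ℝ := ⟨μ⟩
  haveI : SigmaFinite (volume : Measure ℝ) := hμ
  exact MeasureTheory.integral_fintype_prod_eq_prod g

lemma int_exp_I : (∫ t, Complex.exp ((t:ℂ) * Complex.I)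
    ∂((volume : Measure ℝ).restrict (Set.Icc (0:ℝ) (2*Real.pi)))) = 0 := by
  have h2 : (0:ℝ) ≤ 2 * Real.pi := by positivity
  have key : (∫ t in (0:ℝ)..(2*Real.pi), Complex.exp (Complex.I * (t:ℂ))) = 0 := by
    rw [integral_exp_mul_complex Complex.I_ne_zero,
      show Complex.I * ((2*Real.pi:ℝ):ℂ) = 2*Real.pi*Complex.I by push_cast; ring,
      Complex.exp_two_pi_mul_I]
    simp
  have : (∫ t in Set.Icc (0:ℝ) (2*Real.pi), Complex.exp (Complex.I * (t:ℂ))) = 0 := by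
    rw [MeasureTheory.integral_Icc_eq_integral_Ioc, ← intervalIntegral.integral_of_le h2]
    exact key
  simpa [mul_comm] using this

lemma int_one : (∫ _t, (1:ℂ)
    ∂((volume : Measure ℝ).restrict (Set.Icc (0:ℝ) (2*Real.pi)))) = ((2*Real.pi : ℝ) : ℂ) := by
  have h2 : (0:ℝ) ≤ 2 * Real.pi := by positivity
  simp [Real.volume_Icc, ENNReal.toReal_ofReal h2, Complex.real_smul, max_eq_left h2]

lemma torus_int {k : ℕ} (b j : Fin k) :
    (∫ θ : Fin k → ℝ in Set.univ.pi fun _ => Set.Icc (0:ℝ) (2*Real.pi),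
      Complex.exp ((θ b : ℂ) * Complex.I) * Complex.exp (-((θ j : ℂ) * Complex.I)))
    = if b = j then (((2*Real.pi)^k : ℝ) : ℂ) else 0 := by
  have hμ : SigmaFinite ((volume : Measure ℝ).restrict (Set.Icc (0:ℝ) (2*Real.pi))) :=
    inferInstance
  set g : Fin k → ℝ → ℂ := fun c t =>
    (if c = b then Complex.exp ((t:ℂ) * Complex.I) else 1) *
    (if c = j then Complex.exp (-((t:ℂ) * Complex.I)) else 1) with hg
  have hprod : ∀ θ : Fin k → ℝ,
      Complex.exp ((θ b : ℂ) * Complex.I) * Complex.exp (-((θ j : ℂ) * Complex.I))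
      = ∏ c, g c (θ c) := by
    intro θ
    rw [hg]
    simp only [Finset.prod_mul_distrib]
    rw [Finset.prod_ite_eq' Finset.univ b (fun c => Complex.exp ((θ c : ℂ) * Complex.I)),
      Finset.prod_ite_eq' Finset.univ j (fun c => Complex.exp (-((θ c : ℂ) * Complex.I)))]
    simp
  simp_rw [hprod]
  rw [show (volume : Measure (Fin k → ℝ)) = Measure.pi (fun _ => volume) from volume_pi,
    restrict_pi_pi _ _ (fun _ => measurableSet_Icc), integral_pi_prod _ hμ]
  by_cases hbj : b = j
  · subst hbj
    rw [if_pos rfl]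
    have hgc : ∀ c : Fin k,
        (∫ t, g c t ∂((volume : Measure ℝ).restrict (Set.Icc (0:ℝ) (2*Real.pi))))
        = ((2*Real.pi : ℝ) : ℂ) := by
      intro c
      by_cases hc : c = b
      · subst hc
        have : ∀ t : ℝ, g c t = 1 := by
          intro t
          simp only [hg, if_pos rfl, if_true, eq_self_iff_true, ← Complex.exp_add,
            add_neg_cancel, Complex.exp_zero]
        simp_rw [this]
        exact int_one
      · simp only [hg, if_neg hc, one_mul]
        exact int_one
    simp_rw [hgc]
    rw [Finset.prod_const, Finset.card_univ, Fintype.card_fin]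
    push_cast
    ring
  · rw [if_neg hbj]
    refine Finset.prod_eq_zero (Finset.mem_univ b) ?_
    simp only [hg, if_pos rfl, if_neg hbj, mul_one]
    exact int_exp_I

open scoped MatrixOrder in
lemma psd_eq_star_mul {n : Type} [Fintype n] [DecidableEq n] {A : Matrix n n ℂ}
    (hA : A.PosSemidef) : ∃ B : Matrix n n ℂ, A = Bᴴ * B := by
  obtain ⟨X, hX, -, rfl⟩ :=
    CFC.exists_sqrt_of_isSelfAdjoint_of_quasispectrumRestricts hA.isHermitian
      (QuasispectrumRestricts.nnreal_of_nonneg hA.nonneg)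
  exact ⟨X, by rw [show Xᴴ = X from hX.star_eq]⟩

open MeasureTheory in
/-- The `D`-biaverage of a completely positive map `T`, integrating
over the group of diagonal unitaries (parametrised by `𝕋^k` with normalised
Lebesgue/Haar measure), is the Schur multiplier `S_B` with
`b i j = (T (E i j)) i j`; `B` is positive semidefinite, so `γ` is completely
positive. -/
theorem stmt9 (k : ℕ) (hk : 0 < k)
    (T : Matrix (Fin k) (Fin k) ℂ →ₗ[ℂ] Matrix (Fin k) (Fin k) ℂ)
    (hCP : CompletelyPositive (⇑T))
    (Dm : (Fin k → ℝ) → Matrix (Fin k) (Fin k) ℂ)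
    (hDm : ∀ θ, Dm θ = Matrix.diagonal fun j => Complex.exp ((θ j : ℂ) * Complex.I))
    (γ : Matrix (Fin k) (Fin k) ℂ → Matrix (Fin k) (Fin k) ℂ)
    (hγ : ∀ X, γ X = Matrix.of fun i j =>
      (((2 * Real.pi) ^ k)⁻¹) ^ 2 •
        ∫ θ₁ in Set.univ.pi fun _ : Fin k => Set.Icc (0 : ℝ) (2 * Real.pi),
          ∫ θ₂ in Set.univ.pi fun _ : Fin k => Set.Icc (0 : ℝ) (2 * Real.pi),
            ((Dm θ₁)ᴴ * T (Dm θ₁ * X * Dm θ₂) * (Dm θ₂)ᴴ) i j)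
    (B : Matrix (Fin k) (Fin k) ℂ)
    (hB : B = Matrix.of fun i j => (T (Matrix.single i j 1)) i j) :
    (∀ X, γ X = schur B X) ∧ B.PosSemidef ∧ CompletelyPositive γ := by
  set S : Set (Fin k → ℝ) := Set.univ.pi fun _ : Fin k => Set.Icc (0 : ℝ) (2 * Real.pi) with hSdef
  have hScomp : IsCompact S := isCompact_univ_pi fun _ => isCompact_Icc
  have hP : ((2 * Real.pi) ^ k : ℝ) ≠ 0 := by positivity
  -- integrability of the basic exponential products on S
  have hint : ∀ (c : ℂ) (u v : Fin k), Integrable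
      (fun θ : Fin k → ℝ =>
        (Complex.exp ((θ u : ℂ) * Complex.I) * Complex.exp (-((θ v : ℂ) * Complex.I))) * c)
      (volume.restrict S) := by
    intro c u v
    have hcont : Continuous (fun θ : Fin k → ℝ =>
        (Complex.exp ((θ u : ℂ) * Complex.I) * Complex.exp (-((θ v : ℂ) * Complex.I))) * c) := by
      fun_prop
    exact hcont.continuousOn.integrableOn_compact hScomp
  -- Part 1: γ = schur B
  have part1 : ∀ X, γ X = schur B X := by
    intro X
    ext i j
    rw [hγ]
    show (((2 * Real.pi) ^ k)⁻¹) ^ 2 •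
        (∫ θ₁ in S, ∫ θ₂ in S, ((Dm θ₁)ᴴ * T (Dm θ₁ * X * Dm θ₂) * (Dm θ₂)ᴴ) i j)
        = B i j * X i j
    have hmid : ∀ θ₁ θ₂ : Fin k → ℝ, Dm θ₁ * X * Dm θ₂ =
        ∑ a : Fin k, ∑ b : Fin k,
          (Complex.exp ((θ₁ a : ℂ) * Complex.I) * Complex.exp ((θ₂ b : ℂ) * Complex.I) * X a b) •
            Matrix.single a b (1:ℂ) := by
      intro θ₁ θ₂
      rw [hDm, hDm]
      ext a b
      simp [Matrix.sum_apply, Matrix.diagonal_mul, Matrix.mul_diagonal,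
        Matrix.single, Matrix.smul_apply, mul_ite, ite_and, Finset.sum_ite_eq,
        smul_eq_mul]
      ring
    have hT : ∀ θ₁ θ₂ : Fin k → ℝ, (T (Dm θ₁ * X * Dm θ₂)) i j =
        ∑ a : Fin k, ∑ b : Fin k,
          Complex.exp ((θ₁ a : ℂ) * Complex.I) * Complex.exp ((θ₂ b : ℂ) * Complex.I) * X a b *
            (T (Matrix.single a b (1:ℂ))) i j := by
      intro θ₁ θ₂
      rw [hmid θ₁ θ₂]
      rw [map_sum]
      simp only [map_sum, LinearMap.map_smul, Matrix.sum_apply, Matrix.smul_apply, smul_eq_mul]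
    have hin : ∀ θ₁ θ₂ : Fin k → ℝ,
        ((Dm θ₁)ᴴ * T (Dm θ₁ * X * Dm θ₂) * (Dm θ₂)ᴴ) i j =
        ∑ a : Fin k, ∑ b : Fin k,
          (Complex.exp ((θ₂ b : ℂ) * Complex.I) * Complex.exp (-((θ₂ j : ℂ) * Complex.I))) *
            ((Complex.exp ((θ₁ a : ℂ) * Complex.I) * Complex.exp (-((θ₁ i : ℂ) * Complex.I))) *
              (X a b * (T (Matrix.single a b (1:ℂ))) i j)) := by
      intro θ₁ θ₂
      have e1 : (Dm θ₁)ᴴ = Matrix.diagonal fun a => Complex.exp (-((θ₁ a : ℂ) * Complex.I)) := by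
        have hst : (star fun j => Complex.exp (((θ₁ j : ℝ):ℂ) * Complex.I))
            = fun a => Complex.exp (-(((θ₁ a : ℝ):ℂ) * Complex.I)) := by
          funext a
          rw [Pi.star_apply]
          exact star_exp_real _
        rw [hDm, Matrix.diagonal_conjTranspose, hst]
      have e2 : (Dm θ₂)ᴴ = Matrix.diagonal fun a => Complex.exp (-((θ₂ a : ℂ) * Complex.I)) := by
        have hst : (star fun j => Complex.exp (((θ₂ j : ℝ):ℂ) * Complex.I))
            = fun a => Complex.exp (-(((θ₂ a : ℝ):ℂ) * Complex.I)) := by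
          funext a
          rw [Pi.star_apply]
          exact star_exp_real _
        rw [hDm, Matrix.diagonal_conjTranspose, hst]
      rw [e1, e2, Matrix.mul_diagonal, Matrix.diagonal_mul, hT θ₁ θ₂]
      rw [Finset.mul_sum, Finset.sum_mul]
      refine Finset.sum_congr rfl fun a _ => ?_
      rw [Finset.mul_sum, Finset.sum_mul]
      refine Finset.sum_congr rfl fun b _ => ?_
      ring
    simp_rw [hin]
    -- compute inner integral
    have hinner : ∀ θ₁ : Fin k → ℝ,
        (∫ θ₂ in S, ∑ a : Fin k, ∑ b : Fin k,
          (Complex.exp ((θ₂ b : ℂ) * Complex.I) * Complex.exp (-((θ₂ j : ℂ) * Complex.I))) *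
            ((Complex.exp ((θ₁ a : ℂ) * Complex.I) * Complex.exp (-((θ₁ i : ℂ) * Complex.I))) *
              (X a b * (T (Matrix.single a b (1:ℂ))) i j)))
        = ∑ a : Fin k, ∑ b : Fin k,
          (if b = j then (((2*Real.pi)^k : ℝ) : ℂ) else 0) *
            ((Complex.exp ((θ₁ a : ℂ) * Complex.I) * Complex.exp (-((θ₁ i : ℂ) * Complex.I))) *
              (X a b * (T (Matrix.single a b (1:ℂ))) i j)) := by
      intro θ₁
      rw [integral_finset_sum _ (fun a _ => integrable_finset_sum _ (fun b _ => hint _ b j))]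
      refine Finset.sum_congr rfl fun a _ => ?_
      rw [integral_finset_sum _ (fun b _ => hint _ b j)]
      refine Finset.sum_congr rfl fun b _ => ?_
      rw [MeasureTheory.integral_mul_const, torus_int b j]
    simp_rw [hinner]
    -- compute outer integral
    have houter :
        (∫ θ₁ in S, ∑ a : Fin k, ∑ b : Fin k,
          (if b = j then (((2*Real.pi)^k : ℝ) : ℂ) else 0) *
            ((Complex.exp ((θ₁ a : ℂ) * Complex.I) * Complex.exp (-((θ₁ i : ℂ) * Complex.I))) *
              (X a b * (T (Matrix.single a b (1:ℂ))) i j)))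
        = ∑ a : Fin k, ∑ b : Fin k,
          (if b = j then (((2*Real.pi)^k : ℝ) : ℂ) else 0) *
            ((if a = i then (((2*Real.pi)^k : ℝ) : ℂ) else 0) *
              (X a b * (T (Matrix.single a b (1:ℂ))) i j)) := by
      rw [integral_finset_sum _ (fun a _ => integrable_finset_sum _
        (fun b _ => ((hint _ a i).const_mul _)))]
      refine Finset.sum_congr rfl fun a _ => ?_
      rw [integral_finset_sum _ (fun b _ => ((hint _ a i).const_mul _))]
      refine Finset.sum_congr rfl fun b _ => ?_
      rw [MeasureTheory.integral_const_mul, MeasureTheory.integral_mul_const, torus_int a i]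
    rw [houter]
    -- collapse the sums
    have hcollapse : (∑ a : Fin k, ∑ b : Fin k,
        (if b = j then (((2*Real.pi)^k : ℝ) : ℂ) else 0) *
          ((if a = i then (((2*Real.pi)^k : ℝ) : ℂ) else 0) *
            (X a b * (T (Matrix.single a b (1:ℂ))) i j)))
        = (((2*Real.pi)^k : ℝ) : ℂ) * ((((2*Real.pi)^k : ℝ) : ℂ) *
            (X i j * (T (Matrix.single i j (1:ℂ))) i j)) := by
      simp [mul_ite, ite_mul, zero_mul, mul_zero, Finset.sum_ite_eq, Finset.mem_univ]
    rw [hcollapse, hB]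
    simp only [Matrix.of_apply]
    rw [Complex.real_smul]
    push_cast
    field_simp
  -- Part 2: B is positive semidefinite
  have part2 : B.PosSemidef := by
    classical
    -- the rank-one projection pattern matrix
    set v : (Fin k × Fin k) → ℂ := fun p => if p.1 = p.2 then 1 else 0 with hv
    set W : Matrix (Fin k × Fin k) (Fin k × Fin k) ℂ :=
      Matrix.of fun p q => v p * v q with hW
    have hWpsd : W.PosSemidef := by
      have : W = (Matrix.of fun _ p => v p : Matrix (Fin 1) (Fin k × Fin k) ℂ)ᴴ *
          (Matrix.of fun _ p => v p : Matrix (Fin 1) (Fin k × Fin k) ℂ) := by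
        ext p q
        simp only [hW, Matrix.mul_apply, Matrix.conjTranspose_apply, Matrix.of_apply,
          Finset.univ_unique, Finset.sum_singleton]
        have : star (v p) = v p := by
          simp only [hv]
          split_ifs <;> simp
        rw [this]
      rw [this]
      exact Matrix.posSemidef_conjTranspose_mul_self _
    have hChoi := hCP k W hWpsd
    have hentry : ∀ p q : Fin k × Fin k,
        (Matrix.of fun i j => W (p.1, i) (q.1, j)) = Matrix.single p.1 q.1 (1:ℂ) := by
      intro p q
      ext a b
      simp only [Matrix.of_apply, hW, hv, Matrix.single]
      by_cases h1 : p.1 = a <;> by_cases h2 : q.1 = b <;> simp [h1, h2]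
    have hChoi' : (Matrix.of fun p q : Fin k × Fin k =>
        (T (Matrix.single p.1 q.1 (1:ℂ))) p.2 q.2).PosSemidef := by
      have heq : (Matrix.of fun p q : Fin k × Fin k =>
          (T (Matrix.of fun i j => W (p.1, i) (q.1, j))) p.2 q.2)
          = Matrix.of fun p q : Fin k × Fin k =>
            (T (Matrix.single p.1 q.1 (1:ℂ))) p.2 q.2 := by
        ext p q
        rw [Matrix.of_apply, Matrix.of_apply, hentry p q]
      rw [← heq]
      exact hChoi
    have : B = (Matrix.of fun p q : Fin k × Fin k =>
        (T (Matrix.single p.1 q.1 (1:ℂ))) p.2 q.2).submatrix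
        (fun i : Fin k => ((i, i) : Fin k × Fin k)) (fun i => (i, i)) := by
      ext i j
      simp [hB, Matrix.submatrix_apply]
    rw [this]
    exact hChoi'.submatrix _
  -- Part 3: γ is completely positive
  have part3 : CompletelyPositive γ := by
    intro m A hA
    obtain ⟨C, hC⟩ := psd_eq_star_mul hA
    obtain ⟨D, hD⟩ := psd_eq_star_mul part2
    have hres : (Matrix.of fun p q : Fin m × Fin k =>
        (γ (Matrix.of fun i j => A (p.1, i) (q.1, j))) p.2 q.2)
        = (Matrix.of fun (u : Fin k × (Fin m × Fin k)) (p : Fin m × Fin k) =>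
            D u.1 p.2 * C u.2 p)ᴴ *
          (Matrix.of fun (u : Fin k × (Fin m × Fin k)) (p : Fin m × Fin k) =>
            D u.1 p.2 * C u.2 p) := by
      ext p q
      obtain ⟨p1, p2⟩ := p
      obtain ⟨q1, q2⟩ := q
      rw [Matrix.of_apply, part1, schur]
      show B p2 q2 * A (p1, p2) (q1, q2) = _
      rw [hC, hD]
      simp only [Matrix.mul_apply, Matrix.conjTranspose_apply, Matrix.of_apply]
      rw [Finset.sum_mul_sum, Fintype.sum_prod_type]
      refine Finset.sum_congr rfl fun u _ => Finset.sum_congr rfl fun w _ => ?_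
      simp only [star_mul']
      ring
    rw [hres]
    exact Matrix.posSemidef_conjTranspose_mul_self _
  exact ⟨part1, part2, part3⟩


end
end Paper
end

section
/- Let $T\colon M_k\to M_k$ be completely positive and let $\gamma(X)=\frac{1}{4^k}\sum_{D_1,D_2} D_1^* T(D_1 X D_2) D_2^*$, where $D_1, D_2$ range over the $2^k$ diagonal matrices with entries $\pm 1$. Then $\gamma$ is the Schur multiplier $S_B$ where $b_{i,j}=T(E_{i,j})_{i,j}$, and $B$ is positive semidefinite. -/
open scoped Matrix.Norms.L2Operator ComplexOrder

namespace Paper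

noncomputable section
open Matrix

section Aux

private lemma mySignSum (k : ℕ) (p i : Fin k) :
    ∑ s : Fin k → Bool, (if s p then (1:ℂ) else -1) * (if s i then (1:ℂ) else -1)
      = if p = i then (2:ℂ)^k else 0 := by
  rcases eq_or_ne p i with h | h
  · subst h
    have : ∀ s : Fin k → Bool,
        (if s p then (1:ℂ) else -1) * (if s p then (1:ℂ) else -1) = 1 := by
      intro s; cases s p <;> norm_num
    simp only [this, Finset.sum_const, Finset.card_univ, if_pos rfl]
    simp [Fintype.card_fun]
  · rw [if_neg h]
    apply Finset.sum_ninvolution (fun s => Function.update s p (!s p))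
    · intro s
      rw [Function.update_self, Function.update_of_ne (by exact fun hh => h (hh ▸ rfl))]
      cases hs : s p <;> cases s i <;> norm_num
    · intro s _ heq
      have := congrFun heq p
      rw [Function.update_self] at this
      cases s p <;> simp_all
    · intro s; exact Finset.mem_univ _
    · intro s
      funext j
      rcases eq_or_ne j p with rfl | hj
      · simp
      · simp [Function.update_of_ne hj]

private lemma mySum4Comm {α β : Type*} [Fintype α] [Fintype β] (f : α → α → β → β → ℂ) :
    ∑ s₁ : α, ∑ s₂ : α, ∑ i : β, ∑ j : β, f s₁ s₂ i j
      = ∑ i : β, ∑ j : β, ∑ s₁ : α, ∑ s₂ : α, f s₁ s₂ i j := by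
  calc ∑ s₁ : α, ∑ s₂ : α, ∑ i : β, ∑ j : β, f s₁ s₂ i j
      = ∑ s₁ : α, ∑ i : β, ∑ s₂ : α, ∑ j : β, f s₁ s₂ i j :=
        Finset.sum_congr rfl fun s₁ _ => Finset.sum_comm
    _ = ∑ i : β, ∑ s₁ : α, ∑ s₂ : α, ∑ j : β, f s₁ s₂ i j := Finset.sum_comm
    _ = ∑ i : β, ∑ s₁ : α, ∑ j : β, ∑ s₂ : α, f s₁ s₂ i j :=
        Finset.sum_congr rfl fun i _ => Finset.sum_congr rfl fun s₁ _ => Finset.sum_comm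
    _ = ∑ i : β, ∑ j : β, ∑ s₁ : α, ∑ s₂ : α, f s₁ s₂ i j :=
        Finset.sum_congr rfl fun i _ => Finset.sum_comm

end Aux

/-- Averaging a completely positive map `T` over the `2^k`
diagonal sign matrices on both sides yields the Schur multiplier `S_B` with
`b i j = (T (E i j)) i j`, and `B` is positive semidefinite. -/
theorem stmt10 (k : ℕ)
    (T : Matrix (Fin k) (Fin k) ℂ →ₗ[ℂ] Matrix (Fin k) (Fin k) ℂ)
    (hCP : CompletelyPositive (⇑T))
    (Dm : (Fin k → Bool) → Matrix (Fin k) (Fin k) ℂ)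
    (hDm : ∀ s, Dm s = Matrix.diagonal fun j => if s j then (1 : ℂ) else -1)
    (γ : Matrix (Fin k) (Fin k) ℂ → Matrix (Fin k) (Fin k) ℂ)
    (hγ : ∀ X, γ X = ((4 : ℂ) ^ k)⁻¹ •
      ∑ s₁ : Fin k → Bool, ∑ s₂ : Fin k → Bool,
        (Dm s₁)ᴴ * T (Dm s₁ * X * Dm s₂) * (Dm s₂)ᴴ)
    (B : Matrix (Fin k) (Fin k) ℂ)
    (hB : B = Matrix.of fun i j => (T (Matrix.single i j 1)) i j) :
    (∀ X, γ X = schur B X) ∧ B.PosSemidef := by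
  classical
  constructor
  · -- γ is the Schur multiplier S_B
    intro X
    rw [hγ X]
    set ε : (Fin k → Bool) → Fin k → ℂ := fun s j => if s j then (1:ℂ) else -1 with hε
    have hDmH : ∀ s, (Dm s)ᴴ = Matrix.diagonal (ε s) := by
      intro s
      rw [hDm, diagonal_conjTranspose]
      ext a b
      rcases eq_or_ne a b with rfl | hab
      · simp only [Matrix.diagonal_apply_eq, Pi.star_apply, hε]
        cases s a <;> simp
      · simp [Matrix.diagonal_apply_ne _ hab]
    have hXdecomp : ∀ s₁ s₂ : Fin k → Bool, Dm s₁ * X * Dm s₂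
        = ∑ i : Fin k, ∑ j : Fin k, (ε s₁ i * X i j * ε s₂ j) • Matrix.single i j 1 := by
      intro s₁ s₂
      ext a b
      simp only [hDm, Matrix.mul_diagonal, Matrix.diagonal_mul, Matrix.sum_apply,
        Matrix.smul_apply, smul_eq_mul, Matrix.single, Matrix.of_apply, ite_and,
        mul_ite, mul_one, mul_zero, Finset.sum_ite_irrel, Finset.sum_ite_eq,
        Finset.sum_const_zero, Finset.mem_univ, if_true]
      simp only [hε]
      cases hs₁ : s₁ a <;> cases hs₂ : s₂ b <;> simp [hs₁, hs₂]
    ext p q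
    simp only [Matrix.smul_apply, Matrix.sum_apply, smul_eq_mul, schur, hB, Matrix.of_apply]
    have entry : ∀ s₁ s₂ : Fin k → Bool,
        ((Dm s₁)ᴴ * T (Dm s₁ * X * Dm s₂) * (Dm s₂)ᴴ) p q
          = ∑ i : Fin k, ∑ j : Fin k,
              (ε s₁ p * ε s₁ i) * ((ε s₂ q * ε s₂ j) *
                (X i j * (T (Matrix.single i j 1)) p q)) := by
      intro s₁ s₂
      rw [hXdecomp s₁ s₂]
      simp only [hDmH, Matrix.mul_diagonal, Matrix.diagonal_mul, map_sum, _root_.map_smul,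
        Matrix.sum_apply, Matrix.smul_apply, smul_eq_mul]
      rw [Finset.mul_sum, Finset.sum_mul]
      refine Finset.sum_congr rfl fun i _ => ?_
      rw [Finset.mul_sum, Finset.sum_mul]
      refine Finset.sum_congr rfl fun j _ => ?_
      ring
    simp only [entry]
    rw [mySum4Comm]
    have factor : ∀ i j : Fin k,
        (∑ s₁ : Fin k → Bool, ∑ s₂ : Fin k → Bool,
          (ε s₁ p * ε s₁ i) * ((ε s₂ q * ε s₂ j) *
            (X i j * (T (Matrix.single i j 1)) p q)))
        = (if p = i then (2:ℂ)^k else 0) * ((if q = j then (2:ℂ)^k else 0) *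
            (X i j * (T (Matrix.single i j 1)) p q)) := by
      intro i j
      rw [← mySignSum k p i, ← mySignSum k q j]
      rw [Finset.sum_mul]
      refine Finset.sum_congr rfl fun s₁ _ => ?_
      rw [Finset.sum_mul, Finset.mul_sum]
    simp only [factor, ite_mul, zero_mul, mul_ite, mul_zero, Finset.sum_ite_eq, Finset.mem_univ, if_true]
    have h4 : ((4:ℂ)^k) = 2^k * 2^k := by rw [← mul_pow]; norm_num
    have h2 : ((2:ℂ)^k) ≠ 0 := pow_ne_zero _ two_ne_zero
    rw [h4]
    field_simp
  · -- B is positive semidefinite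
    set v : Fin k × Fin k → ℂ := fun p => if p.1 = p.2 then 1 else 0 with hv
    set Vm : Matrix (Fin 1) (Fin k × Fin k) ℂ := Matrix.of fun _ q => v q with hVm
    have hA : (Vmᴴ * Vm).PosSemidef := Matrix.posSemidef_conjTranspose_mul_self Vm
    have hchoi := hCP (k) (Vmᴴ * Vm) hA
    have hinner : ∀ p q : Fin k × Fin k,
        (Matrix.of fun i j => (Vmᴴ * Vm) (p.1, i) (q.1, j))
          = Matrix.single p.1 q.1 (1:ℂ) := by
      intro p q
      ext i j
      simp [hVm, Matrix.mul_apply, Matrix.conjTranspose_apply, hv, Matrix.single,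
        ite_and, apply_ite (starRingEnd ℂ), eq_comm]
      split_ifs <;> simp_all
    have hEq : (Matrix.of fun p q : Fin k × Fin k =>
        (T (Matrix.of fun i j => (Vmᴴ * Vm) (p.1, i) (q.1, j))) p.2 q.2)
        = Matrix.of fun p q : Fin k × Fin k =>
            (T (Matrix.single p.1 q.1 1)) p.2 q.2 := by
      ext p q
      simp only [Matrix.of_apply]
      rw [hinner p q]
    rw [hEq] at hchoi
    have hsub := hchoi.submatrix (fun i : Fin k => ((i, i) : Fin k × Fin k))
    have hfin : (Matrix.of fun p q : Fin k × Fin k =>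
        (T (Matrix.single p.1 q.1 1)) p.2 q.2).submatrix
          (fun i : Fin k => ((i, i) : Fin k × Fin k)) (fun i : Fin k => ((i, i) : Fin k × Fin k))
        = Matrix.of fun i j => (T (Matrix.single i j 1)) i j := by
      ext i j
      simp [Matrix.submatrix_apply]
    rw [hfin] at hsub
    rwa [hB]


end
end Paper
end
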